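/- arXiv:0906.1798 — 3 statements merged into one kernel-verified Lean document; each statement's English description precedes it below -/
import Mathlib

section
/- Let A be SPD with solution x* of Ax=b, r_k = b - A x_k, and let i_1,…,i_m be indices of m components of largest absolute value in r_k, E_m the corresponding selection matrix, and x_{k+1} = x_k + E_m (E_mᵀ A E_m)^{-1} E_mᵀ r_k. Then ‖x*-x_k‖_A² - ‖x*-x_{k+1}‖_A² ≥ (m / (n λ_max(A))) ‖r_k‖₂². -/
open Matrix


lemma rayleigh {k : ℕ} (A : Matrix (Fin k) (Fin k) ℝ) (hA : A.IsHermitian) (lm : ℝ)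
    (h : ∀ i, hA.eigenvalues i ≤ lm) (v : Fin k → ℝ) :
    v ⬝ᵥ A.mulVec v ≤ lm * (v ⬝ᵥ v) := by
  set U : Matrix (Fin k) (Fin k) ℝ := (hA.eigenvectorUnitary : Matrix (Fin k) (Fin k) ℝ) with hUdef
  have hU1 : U * star U = 1 := mem_unitaryGroup_iff.mp hA.eigenvectorUnitary.2
  have hstar : star U = Uᵀ := by
    rw [Matrix.star_eq_conjTranspose, Matrix.conjTranspose_eq_transpose_of_trivial]
  set w : Fin k → ℝ := Uᵀ.mulVec v with hw
  have h1 : v ⬝ᵥ A.mulVec v = w ⬝ᵥ (Matrix.diagonal hA.eigenvalues).mulVec w := by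
    conv_lhs => rw [hA.spectral_theorem]
    rw [Unitary.conjStarAlgAut_apply, ← hUdef, hstar, RCLike.ofReal_real_eq_id]
    rw [← mulVec_mulVec, ← mulVec_mulVec, dotProduct_mulVec, ← Matrix.mulVec_transpose]
    simp [hw]
  have h2 : w ⬝ᵥ w = v ⬝ᵥ v := by
    rw [hw, dotProduct_mulVec, ← Matrix.mulVec_transpose, Matrix.transpose_transpose,
      mulVec_mulVec, ← hstar, hU1, one_mulVec]
  rw [h1, ← h2]
  simp only [dotProduct, mulVec_diagonal, Finset.mul_sum]
  apply Finset.sum_le_sum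
  intro i _
  have := mul_le_mul_of_nonneg_right (h i) (mul_self_nonneg (w i))
  nlinarith [mul_self_nonneg (w i)]

lemma mulVec_dot {k l : ℕ} (M : Matrix (Fin k) (Fin l) ℝ) (x : Fin l → ℝ) (w : Fin k → ℝ) :
    (M.mulVec x) ⬝ᵥ w = x ⬝ᵥ (Mᵀ.mulVec w) := by
  rw [dotProduct_comm, dotProduct_mulVec, ← Matrix.mulVec_transpose, dotProduct_comm]

set_option maxHeartbeats 1000000 in
theorem stmt_8 {n m : ℕ} (A : Matrix (Fin n) (Fin n) ℝ) (hA : A.PosDef)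
    (lmax : ℝ) (hl : IsGreatest (Set.range hA.1.eigenvalues) lmax)
    (b xstar xk : Fin n → ℝ) (hxstar : A.mulVec xstar = b)
    (rk : Fin n → ℝ) (hrk : rk = b - A.mulVec xk)
    (f : Fin m → Fin n) (hf : StrictMono f)
    (hmax : ∀ i : Fin n, i ∉ Set.range f → ∀ j : Fin m, |rk i| ≤ |rk (f j)|)
    (E : Matrix (Fin n) (Fin m) ℝ) (hE : E = Matrix.of fun i j => if i = f j then 1 else 0)
    (xk1 : Fin n → ℝ)
    (hxk1 : xk1 = xk + E.mulVec ((Eᵀ * A * E)⁻¹.mulVec (Eᵀ.mulVec rk))) :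
    (xstar - xk) ⬝ᵥ A.mulVec (xstar - xk)
      - (xstar - xk1) ⬝ᵥ A.mulVec (xstar - xk1)
      ≥ ((m : ℝ) / (n * lmax)) * (rk ⬝ᵥ rk) := by
  have hAt : Aᵀ = A := hA.1
  have hAe : A.mulVec (xstar - xk) = rk := by
    rw [hrk, ← hxstar, Matrix.mulVec_sub]
  set B := Eᵀ * A * E with hB
  set y := Eᵀ.mulVec rk with hy
  set u := B⁻¹.mulVec y with hu
  -- E facts
  have hEtE : Eᵀ * E = 1 := by
    ext j k
    simp only [hE, Matrix.mul_apply, Matrix.transpose_apply, Matrix.of_apply, Matrix.one_apply]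
    by_cases h : j = k
    · subst h
      simp [Finset.sum_ite_eq]
    · rw [if_neg h]
      apply Finset.sum_eq_zero
      intro x _
      have hnn : ¬x = f k ∨ ¬x = f j := by
        by_contra hc
        push_neg at hc
        exact h (hf.injective (hc.2.symm.trans hc.1))
      rcases hnn with h2 | h2 <;> simp [h2]
  have hEinj : ∀ x : Fin m → ℝ, E.mulVec x = 0 → x = 0 := by
    intro x hx
    have : (Eᵀ * E).mulVec x = 0 := by
      rw [← Matrix.mulVec_mulVec, hx, Matrix.mulVec_zero]
    rwa [hEtE, Matrix.one_mulVec] at this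
  have hBpd : B.PosDef := by
    refine posDef_iff_dotProduct_mulVec.mpr ⟨?_, ?_⟩
    · have : Bᴴ = B := by
        rw [hB, Matrix.conjTranspose_eq_transpose_of_trivial, Matrix.transpose_mul,
          Matrix.transpose_mul, Matrix.transpose_transpose, hAt]
        rw [Matrix.mul_assoc]
      exact this
    · intro x hx
      have hEx : E.mulVec x ≠ 0 := fun hc => hx (hEinj x hc)
      have := hA.dotProduct_mulVec_pos hEx
      simp only [star_trivial] at this ⊢
      calc (0:ℝ) < (E.mulVec x) ⬝ᵥ A.mulVec (E.mulVec x) := this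
        _ = x ⬝ᵥ B.mulVec x := by
            rw [mulVec_dot, hB, Matrix.mulVec_mulVec, Matrix.mulVec_mulVec, Matrix.mul_assoc]
  have hBdet : IsUnit B.det := hBpd.det_pos.ne'.isUnit
  have hBBinv : B * B⁻¹ = 1 := Matrix.mul_nonsing_inv B hBdet
  have hBt : Bᵀ = B := hBpd.1
  have hBu : B.mulVec u = y := by
    rw [hu, Matrix.mulVec_mulVec, hBBinv, Matrix.one_mulVec]
  -- decrease equals u ⬝ᵥ y
  have hAsym : ∀ v w : Fin n → ℝ, v ⬝ᵥ A.mulVec w = w ⬝ᵥ A.mulVec v := by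
    intro v w
    rw [dotProduct_mulVec, ← Matrix.mulVec_transpose, hAt, dotProduct_comm]
  have hduy : (E.mulVec u) ⬝ᵥ rk = u ⬝ᵥ y := by
    rw [mulVec_dot, hy]
  have hdd : (E.mulVec u) ⬝ᵥ A.mulVec (E.mulVec u) = u ⬝ᵥ y := by
    rw [mulVec_dot, Matrix.mulVec_mulVec, Matrix.mulVec_mulVec, ← hB, hBu]
  set e := xstar - xk with he
  have hkey : e ⬝ᵥ A.mulVec e - (xstar - xk1) ⬝ᵥ A.mulVec (xstar - xk1) = u ⬝ᵥ y := by
    have hd : xstar - xk1 = e - E.mulVec u := by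
      rw [hxk1, he]; abel
    rw [hd]
    have hexp : (e - E.mulVec u) ⬝ᵥ A.mulVec (e - E.mulVec u)
        = e ⬝ᵥ A.mulVec e - e ⬝ᵥ A.mulVec (E.mulVec u) - (E.mulVec u) ⬝ᵥ A.mulVec e
          + (E.mulVec u) ⬝ᵥ A.mulVec (E.mulVec u) := by
      rw [Matrix.mulVec_sub, sub_dotProduct, dotProduct_sub, dotProduct_sub]; ring
    rw [hexp, hAsym e (E.mulVec u), hAe, hduy, hdd]; ring
  rw [hkey]
  set c := u ⬝ᵥ y with hc
  set sq := y ⬝ᵥ y with hsq0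
  set a := y ⬝ᵥ B.mulVec y with ha0
  -- Cauchy-Schwarz via discriminant
  have hus : u ⬝ᵥ B.mulVec y = sq := by
    rw [dotProduct_mulVec, ← Matrix.mulVec_transpose, hBt, hBu]
  have hsq : sq * sq ≤ a * c := by
    have hq : ∀ t : ℝ, 0 ≤ a * (t * t) + (2 * sq) * t + c := by
      intro t
      have h0 := hBpd.posSemidef.dotProduct_mulVec_nonneg (u + t • y)
      simp only [star_trivial, Matrix.mulVec_add, Matrix.mulVec_smul, add_dotProduct,
        dotProduct_add, smul_dotProduct, dotProduct_smul, smul_eq_mul] at h0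
      rw [hBu, hus, ← ha0, ← hsq0, ← hc] at h0
      nlinarith [h0]
    have hd := discrim_le_zero hq
    rw [discrim] at hd
    nlinarith [hd]
  -- Rayleigh
  have hray := rayleigh A hA.1 lmax (fun i => hl.2 ⟨i, rfl⟩) (E.mulVec y)
  have haEy : (E.mulVec y) ⬝ᵥ A.mulVec (E.mulVec y) = a := by
    rw [mulVec_dot, Matrix.mulVec_mulVec, Matrix.mulVec_mulVec, ← hB]
  have hEyEy : (E.mulVec y) ⬝ᵥ (E.mulVec y) = sq := by
    rw [mulVec_dot, Matrix.mulVec_mulVec, hEtE, Matrix.one_mulVec]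
  have ha : a ≤ lmax * sq := by rw [← haEy, ← hEyEy]; exact hray
  -- positivity facts
  obtain ⟨i0, hi0⟩ := hl.1
  have hlpos : 0 < lmax := hi0 ▸ hA.eigenvalues_pos i0
  have hnpos : 0 < (n:ℝ) := by exact_mod_cast i0.pos
  have hs0 : 0 ≤ sq := Finset.sum_nonneg fun i _ => mul_self_nonneg _
  have hslc : sq ≤ lmax * c := by
    rcases eq_or_lt_of_le hs0 with hs | hs
    · have hy0 : y = 0 := dotProduct_self_eq_zero.mp hs.symm
      have hc0 : c = 0 := by rw [hc, hy0, dotProduct_zero]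
      rw [← hs, hc0, mul_zero]
    · have hyne : y ≠ 0 := fun hc => by rw [hc] at hsq0; simp [hsq0] at hs
      have hapos : 0 < a := by
        have := hBpd.dotProduct_mulVec_pos hyne
        simpa [star_trivial, ha0] using this
      have hcpos : 0 < c := by nlinarith
      nlinarith [mul_le_mul_of_nonneg_right ha (le_of_lt hcpos)]
  -- m * ‖rk‖² ≤ n * sq
  have hyj : ∀ j, y j = rk (f j) := by
    intro j
    simp [hy, hE, Matrix.mulVec, dotProduct, Finset.sum_ite_eq']
  have hs_eq : sq = ∑ j : Fin m, rk (f j) * rk (f j) := by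
    rw [hsq0, dotProduct]
    exact Finset.sum_congr rfl fun j _ => by rw [hyj]
  set T : Finset (Fin n) := Finset.univ.image f with hT
  have hsumT : ∑ i ∈ T, rk i * rk i = sq := by
    rw [hT, Finset.sum_image (fun p _ q _ h => hf.injective h), ← hs_eq]
  have hcardT : T.card = m := by
    rw [hT, Finset.card_image_of_injective _ hf.injective, Finset.card_univ, Fintype.card_fin]
  have hmn : m ≤ n := by
    have := Finset.card_le_univ T
    rwa [hcardT, Fintype.card_fin] at this
  have hout : ∀ i ∈ Tᶜ, (m:ℝ) * (rk i * rk i) ≤ sq := by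
    intro i hi
    have hir : i ∉ Set.range f := by
      rw [Finset.mem_compl, hT] at hi
      intro ⟨j, hj⟩
      exact hi (Finset.mem_image.mpr ⟨j, Finset.mem_univ j, hj⟩)
    rw [hs_eq]
    calc (m:ℝ) * (rk i * rk i) = ∑ _j : Fin m, rk i * rk i := by
          rw [Finset.sum_const, Finset.card_univ, Fintype.card_fin, nsmul_eq_mul]
      _ ≤ ∑ j : Fin m, rk (f j) * rk (f j) := by
          apply Finset.sum_le_sum
          intro j _
          have h1 := hmax i hir j
          have h2 := mul_self_le_mul_self (abs_nonneg (rk i)) h1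
          rwa [abs_mul_abs_self, abs_mul_abs_self] at h2
  have hsplit : rk ⬝ᵥ rk = ∑ i ∈ T, rk i * rk i + ∑ i ∈ Tᶜ, rk i * rk i := by
    rw [dotProduct]
    exact (Finset.sum_add_sum_compl T _).symm
  have houtsum : ∑ i ∈ Tᶜ, (m:ℝ) * (rk i * rk i) ≤ ((n - m : ℕ):ℝ) * sq := by
    have hcard : Tᶜ.card = n - m := by
      rw [Finset.card_compl, hcardT, Fintype.card_fin]
    calc ∑ i ∈ Tᶜ, (m:ℝ) * (rk i * rk i) ≤ ∑ _i ∈ Tᶜ, sq := Finset.sum_le_sum hout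
      _ = ((n - m : ℕ):ℝ) * sq := by rw [Finset.sum_const, hcard, nsmul_eq_mul]
  clear_value T sq a c
  have hmr : (m:ℝ) * (rk ⬝ᵥ rk) ≤ (n:ℝ) * sq := by
    have hnm : ((n - m : ℕ):ℝ) = (n:ℝ) - (m:ℝ) := by
      rw [Nat.cast_sub hmn]
    rw [hsplit]
    have h2 : (m:ℝ) * (∑ i ∈ T, rk i * rk i + ∑ i ∈ Tᶜ, rk i * rk i)
        = (m:ℝ) * sq + ∑ i ∈ Tᶜ, (m:ℝ) * (rk i * rk i) := by
      rw [mul_add, hsumT, Finset.mul_sum]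
    rw [h2]
    rw [hnm] at houtsum
    nlinarith [houtsum]
  -- conclude
  rw [ge_iff_le, div_mul_eq_mul_div, div_le_iff₀ (by positivity : 0 < (n:ℝ) * lmax)]
  nlinarith [hmr, mul_le_mul_of_nonneg_left hslc (le_of_lt hnpos)]
end

section
/- With E_m a selection of m distinct standard basis columns and A SPD, the decrease in squared A-norm error for the update x_{k+1} = x_k + E_m(E_mᵀAE_m)^{-1}E_mᵀ r_k satisfies ‖x*-x_k‖_A² - ‖x*-x_{k+1}‖_A² ≥ ‖E_mᵀ r_k‖₂² / λ_max(A). -/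
open Matrix

private lemma quadBound9 {N : Type*} [Fintype N] [DecidableEq N] {A : Matrix N N ℝ}
    (hA : A.IsHermitian) {lmax : ℝ} (hl : ∀ i, hA.eigenvalues i ≤ lmax) (v : N → ℝ) :
    v ⬝ᵥ A *ᵥ v ≤ lmax * (v ⬝ᵥ v) := by
  set U : Matrix N N ℝ := (hA.eigenvectorUnitary : Matrix N N ℝ) with hU
  have hstar : star U = Uᵀ := by
    rw [Matrix.star_eq_conjTranspose, Matrix.conjTranspose_eq_transpose_of_trivial]
  have hUU : U * Uᵀ = 1 := by
    rw [← hstar]; exact (Matrix.mem_unitaryGroup_iff).mp hA.eigenvectorUnitary.2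
  set w : N → ℝ := Uᵀ *ᵥ v with hw
  have hvv : v ⬝ᵥ v = w ⬝ᵥ w := by
    rw [hw, mulVec_transpose, eq_comm, ← dotProduct_mulVec, ← mulVec_transpose,
      mulVec_mulVec, hUU, one_mulVec]
  have hAv : v ⬝ᵥ A *ᵥ v = ∑ i, hA.eigenvalues i * (w i * w i) := by
    conv_lhs => rw [hA.spectral_theorem, Unitary.conjStarAlgAut_apply, ← hU, hstar]
    rw [← mulVec_mulVec, ← mulVec_mulVec, dotProduct_mulVec, ← mulVec_transpose, ← hw,
      dotProduct]
    refine Finset.sum_congr rfl fun i _ => ?_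
    rw [mulVec_diagonal]
    simp only [Function.comp_apply, RCLike.ofReal_real_eq_id, id_eq]
    ring
  rw [hAv, hvv, dotProduct, Finset.mul_sum]
  exact Finset.sum_le_sum fun i _ => mul_le_mul_of_nonneg_right (hl i) (mul_self_nonneg _)

private lemma move9 {k l : Type*} [Fintype k] [Fintype l] (M : Matrix k l ℝ) (u : l → ℝ)
    (w : k → ℝ) : (M *ᵥ u) ⬝ᵥ w = u ⬝ᵥ (Mᵀ *ᵥ w) := by
  rw [dotProduct_comm, dotProduct_mulVec, ← mulVec_transpose, dotProduct_comm]

private lemma EtE9 {n m : ℕ} (f : Fin m → Fin n) (hf : Function.Injective f)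
    (E : Matrix (Fin n) (Fin m) ℝ) (hE : E = Matrix.of fun i j => if i = f j then 1 else 0) :
    Eᵀ * E = 1 := by
  ext j j'
  simp only [hE, mul_apply, transpose_apply, of_apply, ite_mul, one_mul, zero_mul]
  rw [Finset.sum_ite_eq' (Finset.univ) (f j) (fun i => if i = f j' then (1:ℝ) else 0)]
  simp [hf.eq_iff, Matrix.one_apply, eq_comm]

private lemma Ene9 {n m : ℕ} (f : Fin m → Fin n) (hf : Function.Injective f)
    (E : Matrix (Fin n) (Fin m) ℝ) (hE : E = Matrix.of fun i j => if i = f j then 1 else 0)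
    {x : Fin m → ℝ} (hx : x ≠ 0) : E *ᵥ x ≠ 0 := by
  obtain ⟨j, hj⟩ := Function.ne_iff.mp hx
  intro h
  apply hj
  have := congrFun h (f j)
  simpa [hE, mulVec, dotProduct, hf.eq_iff] using this

theorem stmt_9 {n m : ℕ} (A : Matrix (Fin n) (Fin n) ℝ) (hA : A.PosDef)
    (lmax : ℝ) (hl : IsGreatest (Set.range hA.1.eigenvalues) lmax)
    (b xstar xk : Fin n → ℝ) (hxstar : A.mulVec xstar = b)
    (rk : Fin n → ℝ) (hrk : rk = b - A.mulVec xk)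
    (f : Fin m → Fin n) (hf : Function.Injective f)
    (E : Matrix (Fin n) (Fin m) ℝ) (hE : E = Matrix.of fun i j => if i = f j then 1 else 0)
    (xk1 : Fin n → ℝ)
    (hxk1 : xk1 = xk + E.mulVec ((Eᵀ * A * E)⁻¹.mulVec (Eᵀ.mulVec rk))) :
    (xstar - xk) ⬝ᵥ A.mulVec (xstar - xk)
      - (xstar - xk1) ⬝ᵥ A.mulVec (xstar - xk1)
      ≥ ((Eᵀ.mulVec rk) ⬝ᵥ (Eᵀ.mulVec rk)) / lmax := by
  have hAsym : Aᵀ = A := by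
    have := hA.1
    rwa [Matrix.IsHermitian, Matrix.conjTranspose_eq_transpose_of_trivial] at this
  obtain ⟨i0, hi0⟩ := hl.1
  have hlpos : 0 < lmax := hi0 ▸ hA.eigenvalues_pos i0
  have hlb : ∀ i, hA.1.eigenvalues i ≤ lmax := fun i => hl.2 ⟨i, rfl⟩
  obtain ⟨B, hB⟩ : ∃ B' : Matrix (Fin m) (Fin m) ℝ, B' = Eᵀ * A * E := ⟨_, rfl⟩
  rw [← hB] at hxk1
  obtain ⟨s, hs⟩ : ∃ s' : Fin m → ℝ, s' = Eᵀ *ᵥ rk := ⟨_, rfl⟩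
  rw [← hs] at hxk1 ⊢
  obtain ⟨y, hy⟩ : ∃ y' : Fin m → ℝ, y' = B⁻¹ *ᵥ s := ⟨_, rfl⟩
  rw [← hy] at hxk1
  obtain ⟨e, he⟩ : ∃ e' : Fin n → ℝ, e' = xstar - xk := ⟨_, rfl⟩
  rw [← he]
  have hBquad : ∀ x : Fin m → ℝ, x ⬝ᵥ (B *ᵥ x) = (E *ᵥ x) ⬝ᵥ (A *ᵥ (E *ᵥ x)) := by
    intro x
    rw [hB, ← mulVec_mulVec, ← mulVec_mulVec, dotProduct_mulVec, vecMul_transpose]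
  have hBpd : B.PosDef := by
    rw [hB]
    refine Matrix.PosDef.of_dotProduct_mulVec_pos ?_ fun x hx => ?_
    · have := Matrix.isHermitian_conjTranspose_mul_mul E hA.1
      rwa [Matrix.conjTranspose_eq_transpose_of_trivial] at this
    · have h2 := hA.dotProduct_mulVec_pos (x := E *ᵥ x) (Ene9 f hf E hE hx)
      simp only [star_trivial] at h2 ⊢
      rw [← hB, hBquad]
      exact h2
  have hBsym : Bᵀ = B := by
    have := hBpd.1
    rwa [Matrix.IsHermitian, Matrix.conjTranspose_eq_transpose_of_trivial] at this
  have hdet : IsUnit B.det := (Matrix.isUnit_iff_isUnit_det _).mp hBpd.isUnit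
  have hBmul : B * B⁻¹ = 1 := Matrix.mul_nonsing_inv B hdet
  have hAe : A *ᵥ e = rk := by rw [he, mulVec_sub, hxstar, hrk]
  have hBy : B *ᵥ y = s := by rw [hy, mulVec_mulVec, hBmul, one_mulVec]
  have hed : xstar - xk1 = e - E *ᵥ y := by
    rw [hxk1, he]; exact sub_add_eq_sub_sub _ _ _
  have hd1 : (E *ᵥ y) ⬝ᵥ (A *ᵥ e) = s ⬝ᵥ y := by
    rw [hAe, move9, ← hs, dotProduct_comm]
  have hd2 : e ⬝ᵥ (A *ᵥ (E *ᵥ y)) = s ⬝ᵥ y := by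
    rw [dotProduct_mulVec, ← mulVec_transpose, hAsym, hAe, dotProduct_mulVec,
      ← mulVec_transpose, ← hs]
  have hd3 : (E *ᵥ y) ⬝ᵥ (A *ᵥ (E *ᵥ y)) = s ⬝ᵥ y := by
    rw [← hBquad, hBy, dotProduct_comm]
  have hmain : e ⬝ᵥ (A *ᵥ e) - (e - E *ᵥ y) ⬝ᵥ (A *ᵥ (e - E *ᵥ y)) = s ⬝ᵥ y := by
    rw [mulVec_sub, dotProduct_sub, sub_dotProduct, sub_dotProduct, hd1, hd2, hd3]
    ring
  have hquadB : ∀ u : Fin m → ℝ, u ⬝ᵥ (B *ᵥ u) ≤ lmax * (u ⬝ᵥ u) := by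
    intro u
    have h := quadBound9 hA.1 hlb (E *ᵥ u)
    have hEu : (E *ᵥ u) ⬝ᵥ (E *ᵥ u) = u ⬝ᵥ u := by
      rw [move9, mulVec_mulVec, EtE9 f hf E hE, one_mulVec]
    rw [hBquad, ← hEu]
    exact h
  open scoped MatrixOrder in obtain ⟨C, hC⟩ : ∃ C' : Matrix (Fin m) (Fin m) ℝ, C' = CFC.sqrt B := ⟨_, rfl⟩
  have hCsym : Cᵀ = C := by
    open scoped MatrixOrder in have := (CFC.sqrt_nonneg B).posSemidef.1
    rw [hC]
    rwa [Matrix.IsHermitian, Matrix.conjTranspose_eq_transpose_of_trivial] at this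
  have hCC : C * C = B := by rw [hC]; open scoped MatrixOrder in exact CFC.sqrt_mul_sqrt_self B hBpd.posSemidef.nonneg
  have hCBC : C * B * C = B * B := by rw [← hCC]; simp only [mul_assoc]
  have hBss : (C *ᵥ y) ⬝ᵥ (B *ᵥ (C *ᵥ y)) = s ⬝ᵥ s := by
    rw [move9, hCsym, mulVec_mulVec, mulVec_mulVec, hCBC, ← mulVec_mulVec,
      hBy, ← hBsym, ← move9, hBy]
  have hu0u0 : (C *ᵥ y) ⬝ᵥ (C *ᵥ y) = s ⬝ᵥ y := by
    rw [move9, hCsym, mulVec_mulVec, hCC, hBy, dotProduct_comm]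
  have hineq : s ⬝ᵥ s ≤ lmax * (s ⬝ᵥ y) := by
    rw [← hBss, ← hu0u0]; exact hquadB (C *ᵥ y)
  rw [hed, hmain, ge_iff_le, div_le_iff₀ hlpos]
  linarith
end

section
/- For the index-selection iteration of Theorem 3 applied repeatedly (each step choosing the m largest-magnitude residual components), the sequence of errors satisfies ‖x*-x_{k+1}‖_A² ≤ (1 - m λ_min(A)/(n λ_max(A))) ‖x*-x_k‖_A², hence the method converges to x* linearly. -/
open Matrix

lemma rayleigh_s17 {N : Type*} [Fintype N] [DecidableEq N] {A : Matrix N N ℝ}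
    (hA : A.IsHermitian) (a c : ℝ)
    (ha : ∀ i, a ≤ hA.eigenvalues i) (hc : ∀ i, hA.eigenvalues i ≤ c) (v : N → ℝ) :
    a * (v ⬝ᵥ v) ≤ v ⬝ᵥ A *ᵥ v ∧ v ⬝ᵥ A *ᵥ v ≤ c * (v ⬝ᵥ v) := by
  set U : Matrix N N ℝ := (hA.eigenvectorUnitary : Matrix N N ℝ) with hU
  have hstar : star U = Uᵀ := by
    rw [Matrix.star_eq_conjTranspose, Matrix.conjTranspose_eq_transpose_of_trivial]
  set w : N → ℝ := Uᵀ *ᵥ v with hw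
  have hUU : U * Uᵀ = 1 := by
    have := (Matrix.mem_unitaryGroup_iff).mp hA.eigenvectorUnitary.2
    rwa [hstar] at this
  have hUw : U *ᵥ w = v := by
    rw [hw, Matrix.mulVec_mulVec, hUU, Matrix.one_mulVec]
  have hquad : v ⬝ᵥ A *ᵥ v = ∑ i, hA.eigenvalues i * (w i * w i) := by
    conv_lhs => rw [hA.spectral_theorem, Unitary.conjStarAlgAut_apply, ← hU, hstar]
    rw [← Matrix.mulVec_mulVec, ← Matrix.mulVec_mulVec, ← hw,
      Matrix.dotProduct_mulVec, ← Matrix.mulVec_transpose, ← hw]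
    simp [Matrix.mulVec_diagonal, dotProduct, mul_comm, mul_assoc, mul_left_comm]
  have hnorm : v ⬝ᵥ v = ∑ i, w i * w i := by
    have : w ⬝ᵥ w = v ⬝ᵥ v := by
      conv_lhs => rw [hw, Matrix.dotProduct_mulVec, Matrix.vecMul_transpose, hUw]
    rw [← this]; rfl
  constructor
  · rw [hquad, hnorm, Finset.mul_sum]
    exact Finset.sum_le_sum fun i _ => mul_le_mul_of_nonneg_right (ha i) (mul_self_nonneg _)
  · rw [hquad, hnorm, Finset.mul_sum]
    exact Finset.sum_le_sum fun i _ => mul_le_mul_of_nonneg_right (hc i) (mul_self_nonneg _)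

lemma quad_nonneg {N : Type*} [Fintype N] {B : Matrix N N ℝ} (hB : B.PosSemidef)
    (z : N → ℝ) : 0 ≤ z ⬝ᵥ B *ᵥ z := by simpa using hB.dotProduct_mulVec_nonneg z

lemma dot_self_nonneg {N : Type*} [Fintype N] (w : N → ℝ) : 0 ≤ w ⬝ᵥ w :=
  Finset.sum_nonneg fun i _ => mul_self_nonneg _

lemma psd_cs {N : Type*} [Fintype N] {B : Matrix N N ℝ} (hB : B.PosSemidef)
    (u v : N → ℝ) : (u ⬝ᵥ B *ᵥ v)^2 ≤ (u ⬝ᵥ B *ᵥ u) * (v ⬝ᵥ B *ᵥ v) := by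
  have hsym : ∀ a b : N → ℝ, a ⬝ᵥ B *ᵥ b = b ⬝ᵥ B *ᵥ a := by
    intro a b
    rw [Matrix.dotProduct_mulVec, ← Matrix.mulVec_transpose]
    have : Bᵀ = B := by
      have := hB.1
      rwa [Matrix.IsHermitian, Matrix.conjTranspose_eq_transpose_of_trivial] at this
    rw [this, dotProduct_comm]
  have key : ∀ t : ℝ, 0 ≤ (v ⬝ᵥ B *ᵥ v) * (t*t) + (2 * (u ⬝ᵥ B *ᵥ v)) * t + u ⬝ᵥ B *ᵥ u := by
    intro t
    have h := quad_nonneg hB (u + t • v)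
    have expand : (u + t • v) ⬝ᵥ B *ᵥ (u + t • v)
        = (v ⬝ᵥ B *ᵥ v) * (t*t) + (2 * (u ⬝ᵥ B *ᵥ v)) * t + u ⬝ᵥ B *ᵥ u := by
      rw [Matrix.mulVec_add, Matrix.mulVec_smul]
      simp only [add_dotProduct, dotProduct_add, smul_dotProduct,
        dotProduct_smul, smul_eq_mul, hsym v u]
      ring
    rwa [expand] at h
  have h := discrim_le_zero key
  rw [discrim] at h
  nlinarith [h]

lemma inv_quad_lb {N : Type*} [Fintype N] [DecidableEq N] {M : Matrix N N ℝ}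
    (hM : M.PosDef) (c : ℝ) (hc : 0 < c)
    (hub : ∀ v, v ⬝ᵥ M *ᵥ v ≤ c * (v ⬝ᵥ v)) (w : N → ℝ) :
    (w ⬝ᵥ w) / c ≤ w ⬝ᵥ M⁻¹ *ᵥ w := by
  have hunit : IsUnit M.det := hM.det_pos.ne'.isUnit
  have hMMinv : M * M⁻¹ = 1 := Matrix.mul_nonsing_inv _ hunit
  have hsymM : Mᵀ = M := by
    have := hM.1; rwa [Matrix.IsHermitian, Matrix.conjTranspose_eq_transpose_of_trivial] at this
  have hsymMinv : M⁻¹ᵀ = M⁻¹ := by rw [Matrix.transpose_nonsing_inv, hsymM]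
  set u : N → ℝ := M⁻¹ *ᵥ w with hu
  have h1 : u ⬝ᵥ M *ᵥ w = w ⬝ᵥ w := by
    rw [Matrix.dotProduct_mulVec, ← Matrix.mulVec_transpose, hsymM, hu,
      Matrix.mulVec_mulVec, hMMinv, Matrix.one_mulVec]
  have h2 : u ⬝ᵥ M *ᵥ u = w ⬝ᵥ M⁻¹ *ᵥ w := by
    rw [hu, Matrix.mulVec_mulVec, hMMinv, Matrix.one_mulVec, Matrix.dotProduct_mulVec,
      ← Matrix.mulVec_transpose, hsymMinv, dotProduct_comm]
  rcases eq_or_ne w 0 with hw | hw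
  · simp [hw]
  · have hcs := psd_cs hM.posSemidef u w
    rw [h1, h2] at hcs
    have hwM := hub w
    have hww : 0 < w ⬝ᵥ w := by
      rcases lt_or_eq_of_le (dot_self_nonneg w) with h | h
      · exact h
      · exact absurd (dotProduct_self_eq_zero.mp h.symm) hw
    have hq : 0 ≤ w ⬝ᵥ M⁻¹ *ᵥ w := quad_nonneg hM.inv.posSemidef w
    rw [div_le_iff₀ hc]
    nlinarith [hcs, hwM, hww, hq]
lemma sel_bound {n m : ℕ} (r : Fin n → ℝ) (f : Fin m → Fin n) (hf : Function.Injective f)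
    (hsel : ∀ i : Fin n, i ∉ Set.range f → ∀ j : Fin m, |r i| ≤ |r (f j)|) :
    (m:ℝ) * (r ⬝ᵥ r) ≤ (n:ℝ) * (∑ j, r (f j) * r (f j)) := by
  classical
  set ρ : Fin n → ℝ := fun i => r i * r i with hρ
  set T : ℝ := ∑ j, r (f j) * r (f j) with hT
  set S : Finset (Fin n) := Finset.image f Finset.univ with hS
  have hmn : m ≤ n := by
    simpa using Fintype.card_le_of_injective f hf
  have hcardS : S.card = m := by
    rw [hS, Finset.card_image_of_injective _ hf]; simp
  have hsumS : ∑ i ∈ S, ρ i = T := by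
    rw [hS, Finset.sum_image (fun a _ b _ h => hf h)]
  have hbound : ∀ i ∈ Sᶜ, (m:ℝ) * ρ i ≤ T := by
    intro i hi
    have hir : i ∉ Set.range f := by
      rw [Finset.mem_compl] at hi
      intro ⟨j, hj⟩; exact hi (by rw [hS]; exact Finset.mem_image.mpr ⟨j, Finset.mem_univ j, hj⟩)
    have : ∀ j : Fin m, ρ i ≤ ρ (f j) := by
      intro j
      have h := hsel i hir j
      have := mul_self_le_mul_self (abs_nonneg (r i)) h
      rwa [abs_mul_abs_self, abs_mul_abs_self] at this
    calc (m:ℝ) * ρ i = ∑ _j : Fin m, ρ i := by simp [Finset.sum_const, mul_comm]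
    _ ≤ ∑ j, ρ (f j) := Finset.sum_le_sum fun j _ => this j
    _ = T := rfl
  have hTnn : 0 ≤ T := Finset.sum_nonneg fun j _ => mul_self_nonneg _
  have hsplit : r ⬝ᵥ r = ∑ i ∈ S, ρ i + ∑ i ∈ Sᶜ, ρ i := by
    rw [dotProduct, ← Finset.sum_add_sum_compl S ρ]
  have hcompl : (m:ℝ) * ∑ i ∈ Sᶜ, ρ i ≤ ((n:ℝ) - m) * T := by
    rw [Finset.mul_sum]
    calc ∑ i ∈ Sᶜ, (m:ℝ) * ρ i ≤ ∑ _i ∈ Sᶜ, T := Finset.sum_le_sum hbound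
    _ = (Sᶜ.card : ℝ) * T := by rw [Finset.sum_const]; simp [nsmul_eq_mul]
    _ = ((n:ℝ) - m) * T := by
        rw [Finset.card_compl, hcardS]
        simp [Nat.cast_sub hmn]
  rw [hsplit, hsumS]
  nlinarith [hcompl, hTnn]


set_option maxHeartbeats 2000000 in
lemma step_bound {n m : ℕ} (hn : 0 < n) (hm : 0 < m)
    (A : Matrix (Fin n) (Fin n) ℝ) (hA : A.PosDef)
    (lmin lmax : ℝ) (hlmin : 0 < lmin) (hlmax : 0 < lmax)
    (hlb : ∀ i, lmin ≤ hA.1.eigenvalues i) (hub : ∀ i, hA.1.eigenvalues i ≤ lmax)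
    (fk : Fin m → Fin n) (hfk : Function.Injective fk)
    (rk ek : Fin n → ℝ) (hrk : rk = A *ᵥ ek)
    (hsel : ∀ i : Fin n, i ∉ Set.range fk → ∀ j : Fin m, |rk i| ≤ |rk (fk j)|)
    (Ek : Matrix (Fin n) (Fin m) ℝ)
    (hEk : Ek = Matrix.of fun i j => if i = fk j then 1 else 0) :
    (ek - Ek *ᵥ ((Ekᵀ * A * Ek)⁻¹ *ᵥ (Ekᵀ *ᵥ rk))) ⬝ᵥ
        A *ᵥ (ek - Ek *ᵥ ((Ekᵀ * A * Ek)⁻¹ *ᵥ (Ekᵀ *ᵥ rk)))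
      ≤ (1 - m * lmin / (n * lmax)) * (ek ⬝ᵥ A *ᵥ ek) := by
  classical
  have hAsym : Aᵀ = A := by
    have := hA.1; rwa [Matrix.IsHermitian, Matrix.conjTranspose_eq_transpose_of_trivial] at this
  -- basic E facts
  have hEapp : ∀ i j, Ek i j = if i = fk j then 1 else 0 := fun i j => by rw [hEk]; rfl
  have hEtapp : ∀ (a : Fin n → ℝ) j, (Ekᵀ *ᵥ a) j = a (fk j) := by
    intro a j
    simp only [Matrix.mulVec, dotProduct, Matrix.transpose_apply, hEapp]
    simp [ite_mul]
  have hEmulapp : ∀ (v : Fin m → ℝ) j, (Ek *ᵥ v) (fk j) = v j := by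
    intro v j
    simp only [Matrix.mulVec, dotProduct, hEapp]
    rw [Finset.sum_congr rfl (fun l _ => by
      rw [show (if fk j = fk l then (1:ℝ) else 0) = if j = l then 1 else 0 from
        if_congr ⟨fun h => hfk h, fun h => by rw [h]⟩ rfl rfl])]
    simp [ite_mul]
  have hadj : ∀ (a : Fin n → ℝ) (v : Fin m → ℝ), a ⬝ᵥ Ek *ᵥ v = (Ekᵀ *ᵥ a) ⬝ᵥ v := by
    intro a v; rw [Matrix.dotProduct_mulVec, ← Matrix.mulVec_transpose]
  have hAadj : ∀ a c : Fin n → ℝ, a ⬝ᵥ A *ᵥ c = (A *ᵥ a) ⬝ᵥ c := by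
    intro a c; rw [Matrix.dotProduct_mulVec, ← Matrix.mulVec_transpose, hAsym]
  have hEtE : Ekᵀ * Ek = 1 := by
    ext j j'
    rw [Matrix.mul_apply]
    simp only [Matrix.transpose_apply, hEapp]
    rw [Finset.sum_congr rfl (fun i _ => by rw [ite_mul, one_mul, zero_mul]),
      Finset.sum_ite_eq' Finset.univ (fk j) (fun i => if i = fk j' then (1:ℝ) else 0)]
    simp only [Finset.mem_univ, if_true, Matrix.one_apply]
    exact if_congr ⟨fun h => hfk h, fun h => by rw [h]⟩ rfl rfl
  have hEdot : ∀ v : Fin m → ℝ, (Ek *ᵥ v) ⬝ᵥ (Ek *ᵥ v) = v ⬝ᵥ v := by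
    intro v
    rw [hadj, Matrix.mulVec_mulVec, hEtE, Matrix.one_mulVec]
  set M : Matrix (Fin m) (Fin m) ℝ := Ekᵀ * A * Ek with hM
  have hquadM : ∀ v : Fin m → ℝ, v ⬝ᵥ M *ᵥ v = (Ek *ᵥ v) ⬝ᵥ A *ᵥ (Ek *ᵥ v) := by
    intro v
    rw [hM, ← Matrix.mulVec_mulVec, ← Matrix.mulVec_mulVec,
      Matrix.dotProduct_mulVec v Ekᵀ, Matrix.vecMul_transpose]
  have hMpd : M.PosDef := by
    refine Matrix.PosDef.of_dotProduct_mulVec_pos ?_ ?_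
    · rw [Matrix.IsHermitian, Matrix.conjTranspose_eq_transpose_of_trivial, hM,
        Matrix.transpose_mul, Matrix.transpose_mul, Matrix.transpose_transpose, hAsym,
        Matrix.mul_assoc]
    · intro v hv
      have hEv : Ek *ᵥ v ≠ 0 := by
        obtain ⟨j, hj⟩ := Function.ne_iff.mp hv
        intro h
        exact hj (by rw [← hEmulapp v j, h]; rfl)
      have := hA.dotProduct_mulVec_pos hEv
      simpa [hquadM] using this
  have hMub : ∀ v : Fin m → ℝ, v ⬝ᵥ M *ᵥ v ≤ lmax * (v ⬝ᵥ v) := by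
    intro v
    rw [hquadM, ← hEdot v]
    exact (rayleigh_s17 hA.1 lmin lmax hlb hub (Ek *ᵥ v)).2
  set w : Fin m → ℝ := Ekᵀ *ᵥ rk with hw
  set u : Fin m → ℝ := M⁻¹ *ᵥ w with hu
  set p : Fin n → ℝ := Ek *ᵥ u with hp
  have hMdet : IsUnit M.det := hMpd.det_pos.ne'.isUnit
  have hMMinv : M * M⁻¹ = 1 := Matrix.mul_nonsing_inv _ hMdet
  have hsymMinv : M⁻¹ᵀ = M⁻¹ := by
    rw [Matrix.transpose_nonsing_inv]
    congr 1
    have := hMpd.1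
    rwa [Matrix.IsHermitian, Matrix.conjTranspose_eq_transpose_of_trivial] at this
  set d : ℝ := w ⬝ᵥ M⁻¹ *ᵥ w with hd
  -- cross terms
  have h1 : ek ⬝ᵥ A *ᵥ p = d := by
    rw [hAadj, ← hrk, hp, hadj, ← hw, hd, hu]
  have h2 : p ⬝ᵥ A *ᵥ ek = d := by
    rw [dotProduct_comm, ← hAadj, h1]
  have h3 : p ⬝ᵥ A *ᵥ p = d := by
    rw [hp, ← hquadM]
    have hMu : M *ᵥ u = w := by
      rw [hu, Matrix.mulVec_mulVec, hMMinv, Matrix.one_mulVec]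
    rw [hMu, dotProduct_comm]
  have hrec : (ek - p) ⬝ᵥ A *ᵥ (ek - p) = ek ⬝ᵥ A *ᵥ ek - d := by
    rw [Matrix.mulVec_sub, sub_dotProduct, dotProduct_sub,
      dotProduct_sub, h1, h2, h3]
    ring
  have hdlb : (w ⬝ᵥ w) / lmax ≤ d := inv_quad_lb hMpd lmax hlmax hMub w
  have hwj : ∀ j, w j = rk (fk j) := fun j => by rw [hw, hEtapp]
  have hwdot : w ⬝ᵥ w = ∑ j, rk (fk j) * rk (fk j) := by
    simp [dotProduct, hwj]
  have hselb : (m:ℝ) * (rk ⬝ᵥ rk) ≤ (n:ℝ) * (w ⬝ᵥ w) := by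
    rw [hwdot]; exact sel_bound rk fk hfk hsel
  -- r·r ≥ lmin * eAe
  have hq0 : 0 ≤ ek ⬝ᵥ A *ᵥ ek := quad_nonneg hA.posSemidef ek
  have hrr : lmin * (ek ⬝ᵥ A *ᵥ ek) ≤ rk ⬝ᵥ rk := by
    have hray := (rayleigh_s17 hA.1 lmin lmax hlb hub ek).1
    have heq : ek ⬝ᵥ A *ᵥ ek = ek ⬝ᵥ rk := by rw [hrk]
    have hcs : (ek ⬝ᵥ rk)^2 ≤ (ek ⬝ᵥ ek) * (rk ⬝ᵥ rk) := by
      simpa only [dotProduct, pow_two] using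
        Finset.sum_mul_sq_le_sq_mul_sq Finset.univ ek rk
    rw [← heq] at hcs
    set q : ℝ := ek ⬝ᵥ A *ᵥ ek with hqdef
    set s : ℝ := ek ⬝ᵥ ek with hsdef
    set t : ℝ := rk ⬝ᵥ rk with htdef
    have hs0 : 0 ≤ s := Finset.sum_nonneg fun i _ => mul_self_nonneg _
    have ht0 : 0 ≤ t := Finset.sum_nonneg fun i _ => mul_self_nonneg _
    rcases eq_or_lt_of_le hs0 with hs | hs
    · have hqz : q = 0 := by nlinarith [hcs, sq_nonneg q, hq0]
      rw [hqz, mul_zero]; exact ht0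
    · have h1 : lmin * s * q ≤ q * q := mul_le_mul_of_nonneg_right hray hq0
      have h2 : q * q ≤ s * t := by nlinarith [hcs]
      have h3 : s * (lmin * q) ≤ s * t := by nlinarith [h1, h2]
      exact le_of_mul_le_mul_left h3 hs
  -- conclude
  rw [hrec]
  have hnlm : (0:ℝ) < (n:ℝ) * lmax := by positivity
  have hkey : (m:ℝ) * lmin / ((n:ℝ) * lmax) * (ek ⬝ᵥ A *ᵥ ek) ≤ d := by
    rw [div_mul_eq_mul_div, div_le_iff₀ hnlm]
    have hww : w ⬝ᵥ w ≤ d * lmax := by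
      rw [div_le_iff₀ hlmax] at hdlb; exact hdlb
    have hmnn : (0:ℝ) ≤ (m:ℝ) := Nat.cast_nonneg m
    have hnnn : (0:ℝ) ≤ (n:ℝ) := Nat.cast_nonneg n
    have a1 := mul_le_mul_of_nonneg_left hrr hmnn
    have a2 := mul_le_mul_of_nonneg_left hww hnnn
    linarith [a1, a2, hselb]
  have hexp : (1 - (m:ℝ) * lmin / ((n:ℝ) * lmax)) * (ek ⬝ᵥ A *ᵥ ek)
      = ek ⬝ᵥ A *ᵥ ek - (m:ℝ) * lmin / ((n:ℝ) * lmax) * (ek ⬝ᵥ A *ᵥ ek) := by ring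
  rw [hexp]
  linarith [hkey]

theorem stmt_17 {n m : ℕ} (hn : 0 < n) (hm : 0 < m)
    (A : Matrix (Fin n) (Fin n) ℝ) (hA : A.PosDef)
    (lmin lmax : ℝ)
    (hmin : IsLeast (Set.range hA.1.eigenvalues) lmin)
    (hmax : IsGreatest (Set.range hA.1.eigenvalues) lmax)
    (b xstar : Fin n → ℝ) (hxstar : A.mulVec xstar = b)
    (x : ℕ → Fin n → ℝ) (r : ℕ → Fin n → ℝ)
    (hr : ∀ k, r k = b - A.mulVec (x k))
    (f : ℕ → Fin m → Fin n) (hf : ∀ k, Function.Injective (f k))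
    (hsel : ∀ k, ∀ i : Fin n, i ∉ Set.range (f k) → ∀ j : Fin m,
      |r k i| ≤ |r k (f k j)|)
    (E : ℕ → Matrix (Fin n) (Fin m) ℝ)
    (hE : ∀ k, E k = Matrix.of fun i j => if i = f k j then 1 else 0)
    (hstep : ∀ k, x (k+1) = x k +
      (E k).mulVec (((E k)ᵀ * A * E k)⁻¹.mulVec ((E k)ᵀ.mulVec (r k)))) :
    (∀ k, (xstar - x (k+1)) ⬝ᵥ A.mulVec (xstar - x (k+1))
        ≤ (1 - m * lmin / (n * lmax)) *
          ((xstar - x k) ⬝ᵥ A.mulVec (xstar - x k))) ∧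
      Filter.Tendsto x Filter.atTop (nhds xstar) := by
  classical
  -- eigenvalue facts
  obtain ⟨i0, hi0⟩ := hmin.1
  have hlmin : 0 < lmin := hi0 ▸ hA.eigenvalues_pos i0
  obtain ⟨i1, hi1⟩ := hmax.1
  have hlmax : 0 < lmax := hi1 ▸ hA.eigenvalues_pos i1
  have hlb : ∀ i, lmin ≤ hA.1.eigenvalues i := fun i => hmin.2 ⟨i, rfl⟩
  have hub : ∀ i, hA.1.eigenvalues i ≤ lmax := fun i => hmax.2 ⟨i, rfl⟩
  have hminmax : lmin ≤ lmax := (hlb i1).trans_eq hi1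
  have hmn : m ≤ n := by simpa using Fintype.card_le_of_injective (f 0) (hf 0)
  set e : ℕ → Fin n → ℝ := fun k => xstar - x k with he
  have hre : ∀ k, r k = A *ᵥ e k := by
    intro k
    rw [hr k, ← hxstar, he, Matrix.mulVec_sub]
  -- per-step inequality
  have key : ∀ k, e (k+1) ⬝ᵥ A *ᵥ e (k+1)
      ≤ (1 - m * lmin / (n * lmax)) * (e k ⬝ᵥ A *ᵥ e k) := by
    intro k
    have hek1 : e (k+1) = e k - (E k) *ᵥ (((E k)ᵀ * A * E k)⁻¹ *ᵥ ((E k)ᵀ *ᵥ r k)) := by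
      rw [he]
      show xstar - x (k+1) = _
      rw [hstep k]
      ext i
      simp [Matrix.mulVec, sub_sub]
    rw [hek1]
    exact step_bound hn hm A hA lmin lmax hlmin hlmax hlb hub (f k) (hf k)
      (r k) (e k) (hre k) (hsel k) (E k) (hE k)
  constructor
  · exact key
  · -- convergence
    set c : ℝ := 1 - m * lmin / (n * lmax) with hc
    have hn' : (0:ℝ) < n := by exact_mod_cast hn
    have hm' : (0:ℝ) < m := by exact_mod_cast hm
    have hc0 : 0 ≤ c := by
      rw [hc, sub_nonneg, div_le_one (by positivity)]
      have h1 : (m:ℝ) ≤ n := by exact_mod_cast hmn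
      nlinarith [h1, hminmax, hlmin]
    have hc1 : c < 1 := by
      rw [hc, sub_lt_self_iff]
      positivity
    set g : ℕ → ℝ := fun k => e k ⬝ᵥ A *ᵥ e k with hg
    have hg0 : ∀ k, 0 ≤ g k := fun k => quad_nonneg hA.posSemidef (e k)
    have hgc : ∀ k, g k ≤ c ^ k * g 0 := by
      intro k
      induction k with
      | zero => simp
      | succ k ih =>
        calc g (k+1) ≤ c * g k := key k
        _ ≤ c * (c ^ k * g 0) := mul_le_mul_of_nonneg_left ih hc0
        _ = c ^ (k+1) * g 0 := by ring
    have hgtend : Filter.Tendsto g Filter.atTop (nhds 0) := by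
      have hb : Filter.Tendsto (fun k => c ^ k * g 0) Filter.atTop (nhds 0) := by
        have := (tendsto_pow_atTop_nhds_zero_of_lt_one hc0 hc1).mul_const (g 0)
        simpa using this
      exact squeeze_zero hg0 hgc hb
    -- componentwise convergence
    have hcomp : ∀ i, Filter.Tendsto (fun k => e k i) Filter.atTop (nhds 0) := by
      intro i
      have hsq : ∀ k, (e k i)^2 ≤ g k / lmin := by
        intro k
        have hray := (rayleigh_s17 hA.1 lmin lmax hlb hub (e k)).1
        have h1 : (e k i)^2 ≤ e k ⬝ᵥ e k := by
          rw [pow_two]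
          exact Finset.single_le_sum (f := fun j => e k j * e k j)
            (fun j _ => mul_self_nonneg _) (Finset.mem_univ i)
        have h2 : e k ⬝ᵥ e k ≤ g k / lmin := by
          rw [le_div_iff₀ hlmin]
          calc (e k ⬝ᵥ e k) * lmin = lmin * (e k ⬝ᵥ e k) := by ring
          _ ≤ g k := hray
        linarith
      have hsqtend : Filter.Tendsto (fun k => (e k i)^2) Filter.atTop (nhds 0) := by
        apply squeeze_zero (fun k => sq_nonneg _) hsq
        have := hgtend.div_const lmin
        simpa using this
      rw [tendsto_zero_iff_abs_tendsto_zero]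
      have hcont : Filter.Tendsto Real.sqrt (nhds 0) (nhds 0) := by
        simpa using (Real.continuous_sqrt.tendsto 0)
      exact (hcont.comp hsqtend).congr fun k => Real.sqrt_sq_eq_abs _
    rw [tendsto_pi_nhds]
    intro i
    have : ∀ k, x k i = xstar i - e k i := by
      intro k; rw [he]; simp
    simp only [this]
    have := (tendsto_const_nhds (x := xstar i) (f := Filter.atTop (α := ℕ))).sub (hcomp i)
    simpa using this
end
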